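/- Consider the heat equation ∂w/∂t(t,x) = κ(γ⁻¹(w(t,x)))·∂²w/∂x²(t,x) on (0,T] × [0,1] with w(t,0) = δ₀(t), w(t,1) = δ₁(t) for t ∈ [0,T], where δ₀, δ₁ ∈ C⁰([0,T]), γ : ℝ → ℝ is a continuous strictly increasing bijection, and κ ∈ C⁰(ℝ) satisfies κ(u) ≥ κ* > 0 for all u ∈ ℝ. Let φ ∈ (0, π/2) and set η(x) := sin((π − 2φ)x + φ). Then every classical solution w ∈ C⁰([0,T] × [0,1]) ∩ C¹((0,T] × [0,1]) with w[t] ∈ C²([0,1]) for t ∈ (0,T] satisfies, for all ζ ∈ (0, κ*(π − 2φ)²) and t ∈ (0,T]: ‖w[t]‖_∞ ≤ (1/sin(φ))·max( exp(−ζt)·‖w[0]‖_∞, sup_{0<s≤t} max( |δ₀(s)|, |δ₁(s)| )·exp(−ζ(t−s)) ). -/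

import Mathlib

open Set Filter
open Real Topology

/-- sin is at least sin φ on [φ, π-φ]. -/
lemma aux_sin_ge {φ θ : ℝ} (hφ0 : 0 < φ) (hφπ : φ < Real.pi/2)
    (h1 : φ ≤ θ) (h2 : θ ≤ Real.pi - φ) : Real.sin φ ≤ Real.sin θ := by
  have hpi := Real.pi_pos
  rcases le_total θ (Real.pi/2) with h | h
  · exact Real.strictMonoOn_sin.monotoneOn ⟨by linarith, by linarith⟩ ⟨by linarith, h⟩ h1
  · rw [← Real.sin_pi_sub θ]
    exact Real.strictMonoOn_sin.monotoneOn ⟨by linarith, by linarith⟩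
      ⟨by linarith, by linarith⟩ (by linarith)

/-- Second derivative test at an interior max on [0,1]. -/
lemma aux_second_deriv_nonpos (f f1 : ℝ → ℝ) (f2 x₀ : ℝ) (hx₀ : x₀ ∈ Set.Ioo (0:ℝ) 1)
    (hmax : ∀ x ∈ Set.Icc (0:ℝ) 1, f x ≤ f x₀)
    (hdf : ∀ x ∈ Set.Icc (0:ℝ) 1, HasDerivWithinAt f (f1 x) (Set.Icc 0 1) x)
    (hdf1 : HasDerivWithinAt f1 f2 (Set.Icc 0 1) x₀) : f2 ≤ 0 := by
  have hnhds : Set.Icc (0:ℝ) 1 ∈ 𝓝 x₀ := Icc_mem_nhds hx₀.1 hx₀.2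
  have hdx₀ : HasDerivAt f (f1 x₀) x₀ := (hdf x₀ (Ioo_subset_Icc_self hx₀)).hasDerivAt hnhds
  have hlocmax : IsLocalMax f x₀ := by
    filter_upwards [hnhds] with x hx using hmax x hx
  have hf1x₀ : f1 x₀ = 0 := hlocmax.hasDerivAt_eq_zero hdx₀
  by_contra hpos
  push_neg at hpos
  have hdf1' : HasDerivAt f1 f2 x₀ := hdf1.hasDerivAt hnhds
  -- eventually f1 > 0 to the right of x₀
  have hslope : Tendsto (slope f1 x₀) (𝓝[≠] x₀) (𝓝 f2) :=
    hasDerivAt_iff_tendsto_slope.1 hdf1'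
  have hslope' : ∀ᶠ y in 𝓝[>] x₀, 0 < slope f1 x₀ y :=
    (hslope.mono_left (nhdsWithin_mono _ fun y hy => ne_of_gt hy)).eventually
      (eventually_gt_nhds hpos)
  have hf1pos : ∀ᶠ y in 𝓝[>] x₀, 0 < f1 y := by
    filter_upwards [hslope', self_mem_nhdsWithin] with y hy (hy' : x₀ < y)
    have := mul_pos hy (sub_pos.2 hy')
    rw [slope_def_field, div_mul_cancel₀] at this
    · rw [hf1x₀, sub_zero] at this; linarith
    · exact sub_ne_zero.2 (ne_of_gt hy')
  obtain ⟨u, hu, huI⟩ := mem_nhdsGT_iff_exists_Ioo_subset.1 hf1pos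
  have hu' : x₀ < u := hu
  set b := min ((x₀ + u)/2) ((x₀ + 1)/2) with hb
  have hbx : x₀ < b := lt_min (by linarith) (by linarith [hx₀.2])
  have hbu : b < u := lt_of_le_of_lt (min_le_left _ _) (by linarith)
  have hb1 : b < 1 := lt_of_le_of_lt (min_le_right _ _) (by linarith [hx₀.2])
  have hb0 : 0 < b := lt_trans hx₀.1 hbx
  have hsub : Set.Icc x₀ b ⊆ Set.Icc (0:ℝ) 1 := fun y hy =>
    ⟨le_trans hx₀.1.le hy.1, le_trans hy.2 hb1.le⟩
  have hcont : ContinuousOn f (Set.Icc x₀ b) := fun y hy =>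
    ((hdf y (hsub hy)).continuousWithinAt).mono hsub
  have hmono : StrictMonoOn f (Set.Icc x₀ b) := by
    apply strictMonoOn_of_deriv_pos (convex_Icc _ _) hcont
    intro y hy
    rw [interior_Icc] at hy
    have hyI : y ∈ Set.Ioo (0:ℝ) 1 := ⟨lt_trans hx₀.1 hy.1, lt_trans hy.2 hb1⟩
    have hdy : HasDerivAt f (f1 y) y :=
      (hdf y (Ioo_subset_Icc_self hyI)).hasDerivAt (Icc_mem_nhds hyI.1 hyI.2)
    rw [hdy.deriv]
    exact huI ⟨hy.1, lt_trans hy.2 hbu⟩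
  have := hmono (left_mem_Icc.2 hbx.le) (right_mem_Icc.2 hbx.le) hbx
  exact absurd (hmax b (hsub (right_mem_Icc.2 hbx.le))) (not_le.2 this)

/-- At a max over [0,t] attained at s₀ ∈ (0,t], the derivative within Ioc 0 t is ≥ 0. -/
lemma aux_time_deriv_nonneg (g : ℝ → ℝ) (g' t s₀ : ℝ) (hs₀ : s₀ ∈ Set.Ioc 0 t)
    (hmax : ∀ s ∈ Set.Icc 0 t, g s ≤ g s₀)
    (hd : HasDerivWithinAt g g' (Set.Ioc 0 t) s₀) : 0 ≤ g' := by
  have hy : (-(s₀/2)) ∈ posTangentConeAt (Set.Ioc 0 t) s₀ := by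
    apply mem_posTangentConeAt_of_segment_subset
    intro y hy
    rw [segment_symm, segment_eq_Icc (by linarith [hs₀.1] : s₀ + -(s₀/2) ≤ s₀)] at hy
    exact ⟨by linarith [hy.1, hs₀.1], le_trans hy.2 hs₀.2⟩
  have hlm : IsLocalMaxOn g (Set.Ioc 0 t) s₀ :=
    (eventually_nhdsWithin_of_forall hmax).filter_mono
      (nhdsWithin_mono _ Ioc_subset_Icc_self)
  have := hlm.hasFDerivWithinAt_nonpos hd.hasFDerivWithinAt hy
  simp only [ContinuousLinearMap.smulRight_apply, ContinuousLinearMap.one_apply,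
    ContinuousLinearMap.toSpanSingleton_apply, smul_eq_mul] at this
  nlinarith [hs₀.1]

/-- Parabolic comparison principle with the weight `η(x)=sin((π-2φ)x+φ)`. -/
lemma aux_comparison
    (t κstar ζ φ C : ℝ)
    (ht : 0 < t) (hκstar : 0 < κstar) (hC : 0 < C)
    (hφ0 : 0 < φ) (hφπ : φ < Real.pi / 2)
    (hζ0 : 0 < ζ) (hζ : ζ < κstar * (Real.pi - 2*φ)^2)
    (a u ut ux uxx : ℝ → ℝ → ℝ)
    (ha : ∀ s ∈ Set.Ioc (0:ℝ) t, ∀ x ∈ Set.Icc (0:ℝ) 1, κstar ≤ a s x)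
    (hu_cont : ContinuousOn (fun p : ℝ × ℝ => u p.1 p.2) (Set.Icc 0 t ×ˢ Set.Icc 0 1))
    (hut : ∀ s ∈ Set.Ioc (0:ℝ) t, ∀ x ∈ Set.Icc (0:ℝ) 1,
      HasDerivWithinAt (fun τ => u τ x) (ut s x) (Set.Ioc 0 t) s)
    (hux : ∀ s ∈ Set.Ioc (0:ℝ) t, ∀ x ∈ Set.Icc (0:ℝ) 1,
      HasDerivWithinAt (u s) (ux s x) (Set.Icc 0 1) x)
    (huxx : ∀ s ∈ Set.Ioc (0:ℝ) t, ∀ x ∈ Set.Icc (0:ℝ) 1,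
      HasDerivWithinAt (ux s) (uxx s x) (Set.Icc 0 1) x)
    (hpde : ∀ s ∈ Set.Ioc (0:ℝ) t, ∀ x ∈ Set.Icc (0:ℝ) 1, ut s x = a s x * uxx s x)
    (hinit : ∀ x ∈ Set.Icc (0:ℝ) 1,
      u 0 x < C * Real.exp (ζ*(t-0)) * Real.sin ((Real.pi - 2*φ)*x + φ) / Real.sin φ)
    (hlat0 : ∀ s ∈ Set.Ioc (0:ℝ) t, u s 0 < C * Real.exp (ζ*(t-s)))
    (hlat1 : ∀ s ∈ Set.Ioc (0:ℝ) t, u s 1 < C * Real.exp (ζ*(t-s))) :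
    ∀ x ∈ Set.Icc (0:ℝ) 1,
      u t x ≤ C * Real.sin ((Real.pi - 2*φ)*x + φ) / Real.sin φ := by
  have hpi := Real.pi_pos
  set P : ℝ := Real.pi - 2*φ with hPdef
  have hP : 0 < P := by simp only [hPdef]; linarith
  have hsφ : 0 < Real.sin φ := Real.sin_pos_of_pos_of_lt_pi hφ0 (by linarith)
  have hθmem : ∀ x ∈ Set.Icc (0:ℝ) 1, φ ≤ P*x + φ ∧ P*x + φ ≤ Real.pi - φ := by
    intro x hx
    constructor
    · nlinarith [hx.1]
    · nlinarith [hx.2]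
  have hη_pos : ∀ x ∈ Set.Icc (0:ℝ) 1, 0 < Real.sin (P*x + φ) := by
    intro x hx
    obtain ⟨h1, h2⟩ := hθmem x hx
    exact Real.sin_pos_of_pos_of_lt_pi (by linarith) (by linarith)
  have hη_ge : ∀ x ∈ Set.Icc (0:ℝ) 1, Real.sin φ ≤ Real.sin (P*x + φ) := by
    intro x hx
    obtain ⟨h1, h2⟩ := hθmem x hx
    exact aux_sin_ge hφ0 hφπ h1 h2
  -- the comparison function
  set V : ℝ → ℝ → ℝ := fun s x => C * Real.exp (ζ*(t-s)) * Real.sin (P*x + φ) / Real.sin φ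
    with hVdef
  have hV_pos : ∀ s : ℝ, ∀ x ∈ Set.Icc (0:ℝ) 1, 0 < V s x := by
    intro s x hx
    have := hη_pos x hx
    have := Real.exp_pos (ζ*(t-s))
    simp only [hVdef]
    positivity
  -- main claim : u < V on the whole cylinder
  have key : ∀ s ∈ Set.Icc (0:ℝ) t, ∀ x ∈ Set.Icc (0:ℝ) 1, u s x < V s x := by
    by_contra hcon
    push_neg at hcon
    obtain ⟨s₁, hs₁, x₁, hx₁, hge⟩ := hcon
    -- maximize z = u - V on the compact cylinder
    set S : Set (ℝ × ℝ) := Set.Icc (0:ℝ) t ×ˢ Set.Icc (0:ℝ) 1 with hSdef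
    have hVcont : ContinuousOn (fun p : ℝ × ℝ => V p.1 p.2) S := by
      simp only [hVdef]
      fun_prop
    have hzcont : ContinuousOn (fun p : ℝ × ℝ => u p.1 p.2 - V p.1 p.2) S :=
      hu_cont.sub hVcont
    have hScomp : IsCompact S := isCompact_Icc.prod isCompact_Icc
    have hSne : S.Nonempty := ⟨(s₁, x₁), ⟨hs₁, hx₁⟩⟩
    obtain ⟨m, hmS, hmax⟩ := hScomp.exists_isMaxOn hSne hzcont
    obtain ⟨s₀, x₀⟩ := m
    obtain ⟨hs₀, hx₀⟩ := hmS
    dsimp only at hs₀ hx₀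
    have hmax' : ∀ s ∈ Set.Icc (0:ℝ) t, ∀ x ∈ Set.Icc (0:ℝ) 1,
        u s x - V s x ≤ u s₀ x₀ - V s₀ x₀ := fun s hs x hx => by
      simpa using hmax (Set.mk_mem_prod hs hx)
    have hm0 : 0 ≤ u s₀ x₀ - V s₀ x₀ :=
      le_trans (by linarith [hge]) (hmax' s₁ hs₁ x₁ hx₁)
    -- the max point is not on the parabolic boundary
    have hs₀pos : 0 < s₀ := by
      rcases eq_or_lt_of_le hs₀.1 with h | h
      · exfalso
        have := hinit x₀ hx₀
        have hV0 : V 0 x₀ = C * Real.exp (ζ*(t-0)) * Real.sin (P*x₀ + φ) / Real.sin φ := rfl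
        rw [← h] at hm0
        simp only [hVdef] at hm0
        linarith
      · exact h
    have hs₀mem : s₀ ∈ Set.Ioc (0:ℝ) t := ⟨hs₀pos, hs₀.2⟩
    have hVlat0 : V s₀ 0 = C * Real.exp (ζ*(t-s₀)) := by
      simp only [hVdef, mul_zero, zero_add]
      field_simp
    have hVlat1 : V s₀ 1 = C * Real.exp (ζ*(t-s₀)) := by
      simp only [hVdef, mul_one, hPdef]
      rw [show Real.pi - 2*φ + φ = Real.pi - φ by ring, Real.sin_pi_sub]
      field_simp
    have hx₀0 : 0 < x₀ := by
      rcases eq_or_lt_of_le hx₀.1 with h | h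
      · exfalso
        have := hlat0 s₀ hs₀mem
        rw [← h] at hm0
        rw [hVlat0] at hm0
        linarith
      · exact h
    have hx₀1 : x₀ < 1 := by
      rcases eq_or_lt_of_le hx₀.2 with h | h
      · exfalso
        have := hlat1 s₀ hs₀mem
        rw [h] at hm0
        rw [hVlat1] at hm0
        linarith
      · exact h
    have hx₀mem : x₀ ∈ Set.Ioo (0:ℝ) 1 := ⟨hx₀0, hx₀1⟩
    have hVm := hV_pos s₀ x₀ hx₀
    -- time derivative inequality
    have hVt : HasDerivAt (fun s => V s x₀) (-ζ * V s₀ x₀) s₀ := by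
      have h1 : HasDerivAt (fun s : ℝ => ζ*(t-s)) (ζ * (-1)) s₀ :=
        ((hasDerivAt_id s₀).const_sub t).const_mul ζ
      have h2 := ((h1.exp.const_mul C).mul_const
        (Real.sin (P*x₀ + φ))).div_const (Real.sin φ)
      refine h2.congr_deriv ?_
      simp only [hVdef]
      ring
    have htime : 0 ≤ ut s₀ x₀ + ζ * V s₀ x₀ := by
      have hd : HasDerivWithinAt (fun s => u s x₀ - V s x₀)
          (ut s₀ x₀ - (-ζ * V s₀ x₀)) (Set.Ioc 0 t) s₀ :=
        (hut s₀ hs₀mem x₀ hx₀).sub hVt.hasDerivWithinAt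
      have := aux_time_deriv_nonneg _ _ t s₀ hs₀mem
        (fun s hs => hmax' s hs x₀ hx₀) hd
      linarith
    -- space second derivative inequality
    have hspace : uxx s₀ x₀ ≤ -(P^2) * V s₀ x₀ := by
      have hE : ∀ x : ℝ, HasDerivAt (fun y => Real.sin (P*y + φ))
          (Real.cos (P*x + φ) * P) x := by
        intro x
        have h1 : HasDerivAt (fun y : ℝ => P*y + φ) P x := by
          simpa using ((hasDerivAt_id x).const_mul P).add_const φ
        simpa using h1.sin
      have hE2 : HasDerivAt (fun x => Real.cos (P*x + φ) * P)
          (-Real.sin (P*x₀ + φ) * P * P) x₀ := by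
        have h1 : HasDerivAt (fun y : ℝ => P*y + φ) P x₀ := by
          simpa using ((hasDerivAt_id x₀).const_mul P).add_const φ
        simpa [mul_comm, mul_assoc, mul_left_comm] using h1.cos.mul_const P
      have hVx : ∀ x : ℝ, HasDerivAt (fun y => V s₀ y)
          (C * Real.exp (ζ*(t-s₀)) * (Real.cos (P*x + φ) * P) / Real.sin φ) x := by
        intro x
        exact (((hE x).const_mul (C * Real.exp (ζ*(t-s₀)))).div_const (Real.sin φ))
      have hVxx : HasDerivAt
          (fun x => C * Real.exp (ζ*(t-s₀)) * (Real.cos (P*x + φ) * P) / Real.sin φ)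
          (C * Real.exp (ζ*(t-s₀)) * (-Real.sin (P*x₀ + φ) * P * P) / Real.sin φ) x₀ :=
        (hE2.const_mul (C * Real.exp (ζ*(t-s₀)))).div_const (Real.sin φ)
      have h2nd := aux_second_deriv_nonpos (fun x => u s₀ x - V s₀ x)
        (fun x => ux s₀ x - C * Real.exp (ζ*(t-s₀)) * (Real.cos (P*x + φ) * P) / Real.sin φ)
        (uxx s₀ x₀ - C * Real.exp (ζ*(t-s₀)) * (-Real.sin (P*x₀ + φ) * P * P) / Real.sin φ)
        x₀ hx₀mem (fun x hx => hmax' s₀ hs₀ x hx)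
        (fun x hx => (hux s₀ hs₀mem x hx).sub (hVx x).hasDerivWithinAt)
        ((huxx s₀ hs₀mem x₀ hx₀).sub hVxx.hasDerivWithinAt)
      have hVval : C * Real.exp (ζ*(t-s₀)) * (-Real.sin (P*x₀ + φ) * P * P) / Real.sin φ
          = -(P^2) * V s₀ x₀ := by
        simp only [hVdef]
        ring
      linarith [h2nd, hVval.symm ▸ h2nd]
    -- combine with the PDE
    have hpde' := hpde s₀ hs₀mem x₀ hx₀
    have ha' := ha s₀ hs₀mem x₀ hx₀
    have huxxneg : uxx s₀ x₀ ≤ 0 := le_trans hspace (by nlinarith)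
    have hle : a s₀ x₀ * uxx s₀ x₀ ≤ κstar * uxx s₀ x₀ :=
      mul_le_mul_of_nonpos_right ha' huxxneg
    nlinarith [hV_pos s₀ x₀ hx₀]
  -- conclude at time t
  intro x hx
  have := key t (right_mem_Icc.2 ht.le) x hx
  have hVt : V t x = C * Real.sin (P*x + φ) / Real.sin φ := by
    simp only [hVdef, sub_self, mul_zero, Real.exp_zero, mul_one]
  rw [hVt] at this
  exact this.le


/-- **Estimate (3.20)/(3.21) in Example 3.3** (Karafyllis–Krstic): for the transformed
heat equation `w_t = κ(γ⁻¹(w))·w_xx` with Dirichlet data `δ₀, δ₁` and `κ ≥ κ* > 0`,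
for every `φ ∈ (0,π/2)` (with weight `η(x) = sin((π-2φ)x + φ)`) every classical
solution satisfies, for all `ζ ∈ (0, κ*(π-2φ)²)`, a fading memory ISS estimate in the
sup norm with gain `1/sin(φ)`. -/
theorem example3_3_estimate
    (T : ℝ) (hT : 0 < T)
    (κstar : ℝ) (hκstar : 0 < κstar)
    (κ : ℝ → ℝ) (hκ_cont : Continuous κ) (hκ : ∀ v : ℝ, κstar ≤ κ v)
    (γ : ℝ → ℝ) (hγ_cont : Continuous γ) (hγ_mono : StrictMono γ)
    (hγ_surj : Function.Surjective γ)
    (φ : ℝ) (hφ : φ ∈ Set.Ioo 0 (Real.pi / 2))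
    (δ₀ δ₁ : ℝ → ℝ) (hδ₀ : ContinuousOn δ₀ (Set.Icc 0 T)) (hδ₁ : ContinuousOn δ₁ (Set.Icc 0 T))
    (w wt wx wxx : ℝ → ℝ → ℝ)
    (hw_cont : ContinuousOn (fun p : ℝ × ℝ => w p.1 p.2) (Set.Icc 0 T ×ˢ Set.Icc 0 1))
    (hwt : ∀ t ∈ Set.Ioc (0:ℝ) T, ∀ x ∈ Set.Icc (0:ℝ) 1,
      HasDerivWithinAt (fun τ => w τ x) (wt t x) (Set.Ioc 0 T) t)
    (hwt_cont : ContinuousOn (fun p : ℝ × ℝ => wt p.1 p.2) (Set.Ioc 0 T ×ˢ Set.Icc 0 1))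
    (hwx : ∀ t ∈ Set.Ioc (0:ℝ) T, ∀ x ∈ Set.Icc (0:ℝ) 1,
      HasDerivWithinAt (w t) (wx t x) (Set.Icc 0 1) x)
    (hwxx : ∀ t ∈ Set.Ioc (0:ℝ) T, ∀ x ∈ Set.Icc (0:ℝ) 1,
      HasDerivWithinAt (wx t) (wxx t x) (Set.Icc 0 1) x)
    (hwxx_cont : ∀ t ∈ Set.Ioc (0:ℝ) T, ContinuousOn (wxx t) (Set.Icc 0 1))
    (hpde : ∀ t ∈ Set.Ioc (0:ℝ) T, ∀ x ∈ Set.Icc (0:ℝ) 1,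
      wt t x = κ (Function.invFun γ (w t x)) * wxx t x)
    (hbc : ∀ t ∈ Set.Icc (0:ℝ) T, w t 0 = δ₀ t ∧ w t 1 = δ₁ t) :
    ∀ ζ ∈ Set.Ioo (0:ℝ) (κstar * (Real.pi - 2 * φ) ^ 2), ∀ t ∈ Set.Ioc (0:ℝ) T,
      sSup ((fun x => |w t x|) '' Set.Icc 0 1) ≤
        (1 / Real.sin φ) *
          max (Real.exp (-ζ * t) * sSup ((fun x => |w 0 x|) '' Set.Icc 0 1))
            (sSup ((fun s => max (|δ₀ s|) (|δ₁ s|) *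
              Real.exp (-ζ * (t - s))) '' Set.Ioc 0 t)) := by
  intro ζ hζ t htmem
  obtain ⟨hζ0, hζ1⟩ := hζ
  obtain ⟨ht0, htT⟩ := htmem
  have hpi := Real.pi_pos
  obtain ⟨hφ0, hφπ⟩ := hφ
  have hsφ : 0 < Real.sin φ := Real.sin_pos_of_pos_of_lt_pi hφ0 (by linarith)
  set N0 := sSup ((fun x => |w 0 x|) '' Set.Icc (0:ℝ) 1) with hN0def
  set B : ℝ → ℝ := fun s => max (|δ₀ s|) (|δ₁ s|) * Real.exp (-ζ * (t - s)) with hBdef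
  set NB := sSup (B '' Set.Ioc (0:ℝ) t) with hNBdef
  set K := max (Real.exp (-ζ * t) * N0) NB with hKdef
  -- continuity and boundedness facts
  have h0T : (0:ℝ) ∈ Set.Icc (0:ℝ) T := ⟨le_refl 0, hT.le⟩
  have hw0cont : ContinuousOn (fun x => |w 0 x|) (Set.Icc (0:ℝ) 1) := by
    have : ContinuousOn (fun x => w 0 x) (Set.Icc (0:ℝ) 1) := by
      have hmap : ∀ x ∈ Set.Icc (0:ℝ) 1, ((0:ℝ), x) ∈ Set.Icc 0 T ×ˢ Set.Icc (0:ℝ) 1 :=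
        fun x hx => ⟨h0T, hx⟩
      exact hw_cont.comp ((continuous_const.prodMk continuous_id).continuousOn) hmap
    exact this.abs
  have hN0bdd : BddAbove ((fun x => |w 0 x|) '' Set.Icc (0:ℝ) 1) :=
    (isCompact_Icc.image_of_continuousOn hw0cont).bddAbove
  have hN0 : ∀ x ∈ Set.Icc (0:ℝ) 1, |w 0 x| ≤ N0 :=
    fun x hx => le_csSup hN0bdd (Set.mem_image_of_mem _ hx)
  have hN0nonneg : 0 ≤ N0 :=
    le_trans (abs_nonneg _) (hN0 0 ⟨le_refl 0, zero_le_one⟩)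
  obtain ⟨D₀, hD₀⟩ := isCompact_Icc.exists_bound_of_continuousOn hδ₀
  obtain ⟨D₁, hD₁⟩ := isCompact_Icc.exists_bound_of_continuousOn hδ₁
  have hIoctT : Set.Ioc (0:ℝ) t ⊆ Set.Icc (0:ℝ) T :=
    fun s hs => ⟨hs.1.le, le_trans hs.2 htT⟩
  have hNBbdd : BddAbove (B '' Set.Ioc (0:ℝ) t) := by
    refine ⟨max D₀ D₁, ?_⟩
    rintro b ⟨s, hs, rfl⟩
    have h1 : max (|δ₀ s|) (|δ₁ s|) ≤ max D₀ D₁ := by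
      have := hD₀ s (hIoctT hs)
      have := hD₁ s (hIoctT hs)
      rw [Real.norm_eq_abs] at *
      exact max_le_max ‹|δ₀ s| ≤ D₀› ‹|δ₁ s| ≤ D₁›
    have h2 : Real.exp (-ζ * (t - s)) ≤ 1 := by
      rw [Real.exp_le_one_iff]
      nlinarith [hs.2]
    calc B s ≤ max (|δ₀ s|) (|δ₁ s|) * 1 := by
          apply mul_le_mul_of_nonneg_left h2
          exact le_trans (abs_nonneg _) (le_max_left _ _)
      _ ≤ max D₀ D₁ := by rw [mul_one]; exact h1
  have hNB : ∀ s ∈ Set.Ioc (0:ℝ) t, B s ≤ NB :=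
    fun s hs => le_csSup hNBbdd (Set.mem_image_of_mem _ hs)
  have hK1 : Real.exp (-ζ * t) * N0 ≤ K := le_max_left _ _
  have hK2 : NB ≤ K := le_max_right _ _
  have hK0 : 0 ≤ K := le_trans (by positivity) hK1
  -- the pointwise bound with ε slack
  have claim : ∀ ε > (0:ℝ), ∀ x ∈ Set.Icc (0:ℝ) 1, |w t x| ≤ (K + ε) / Real.sin φ := by
    intro ε hε x hx
    have hCpos : 0 < K + ε := by linarith
    set P : ℝ := Real.pi - 2*φ with hPdef
    have hP : 0 < P := by simp only [hPdef]; linarith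
    have hθmem : ∀ y ∈ Set.Icc (0:ℝ) 1, φ ≤ P*y + φ ∧ P*y + φ ≤ Real.pi - φ := by
      intro y hy
      constructor
      · nlinarith [hy.1]
      · nlinarith [hy.2]
    have hη_ge : ∀ y ∈ Set.Icc (0:ℝ) 1, Real.sin φ ≤ Real.sin (P*y + φ) := by
      intro y hy
      obtain ⟨h1, h2⟩ := hθmem y hy
      exact aux_sin_ge hφ0 hφπ h1 h2
    have hη_le : ∀ y : ℝ, Real.sin (P*y + φ) ≤ 1 := fun y => Real.sin_le_one _
    -- bounds needed on the parabolic boundary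
    have hinit_bound : ∀ y ∈ Set.Icc (0:ℝ) 1, |w 0 y| <
        (K + ε) * Real.exp (ζ*(t-0)) * Real.sin (P*y + φ) / Real.sin φ := by
      intro y hy
      have h1 : |w 0 y| ≤ N0 := hN0 y hy
      have h2 : N0 ≤ K * Real.exp (ζ*t) := by
        have := hK1
        have hexp : Real.exp (-ζ*t) * Real.exp (ζ*t) = 1 := by
          rw [← Real.exp_add]; ring_nf; exact Real.exp_zero
        nlinarith [Real.exp_pos (ζ*t), Real.exp_pos (-ζ*t)]
      have h3 : Real.sin φ ≤ Real.sin (P*y + φ) := hη_ge y hy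
      rw [show ζ*(t-0) = ζ*t by ring]
      rw [lt_div_iff₀ hsφ]
      have e1 : |w 0 y| * Real.sin φ ≤ K * Real.exp (ζ*t) * Real.sin φ := by nlinarith
      have e2 : K * Real.exp (ζ*t) * Real.sin φ ≤ K * Real.exp (ζ*t) * Real.sin (P*y + φ) := by
        apply mul_le_mul_of_nonneg_left h3
        positivity
      have e3 : K * Real.exp (ζ*t) * Real.sin (P*y + φ) <
          (K + ε) * Real.exp (ζ*t) * Real.sin (P*y + φ) := by
        have hs' : 0 < Real.sin (P*y + φ) := lt_of_lt_of_le hsφ h3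
        nlinarith [mul_pos (mul_pos hε (Real.exp_pos (ζ*t))) hs']
      linarith
    have hlat_bound : ∀ s ∈ Set.Ioc (0:ℝ) t,
        max (|δ₀ s|) (|δ₁ s|) < (K + ε) * Real.exp (ζ*(t-s)) := by
      intro s hs
      have h1 : B s ≤ NB := hNB s hs
      have hexp : Real.exp (-ζ*(t-s)) * Real.exp (ζ*(t-s)) = 1 := by
        rw [← Real.exp_add]; ring_nf; exact Real.exp_zero
      have h2 : max (|δ₀ s|) (|δ₁ s|) ≤ NB * Real.exp (ζ*(t-s)) := by
        have := mul_le_mul_of_nonneg_right h1 (Real.exp_pos (ζ*(t-s))).le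
        simp only [hBdef] at this
        rw [mul_assoc, hexp, mul_one] at this
        exact this
      have h3 : NB * Real.exp (ζ*(t-s)) ≤ K * Real.exp (ζ*(t-s)) :=
        mul_le_mul_of_nonneg_right hK2 (Real.exp_pos _).le
      nlinarith [Real.exp_pos (ζ*(t-s))]
    -- the coefficient
    set a : ℝ → ℝ → ℝ := fun s x => κ (Function.invFun γ (w s x)) with hadef
    have hIocsub : Set.Ioc (0:ℝ) t ⊆ Set.Ioc (0:ℝ) T := fun s hs => ⟨hs.1, le_trans hs.2 htT⟩
    have hprodsub : Set.Icc (0:ℝ) t ×ˢ Set.Icc (0:ℝ) 1 ⊆ Set.Icc (0:ℝ) T ×ˢ Set.Icc (0:ℝ) 1 :=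
      Set.prod_mono (Set.Icc_subset_Icc_right htT) subset_rfl
    -- upper bound : w ≤ V
    have hup := aux_comparison t κstar ζ φ (K + ε) ht0 hκstar hCpos hφ0 hφπ hζ0
      (by simpa [hPdef] using hζ1) a w wt wx wxx
      (fun s _ x _ => hκ _)
      (hw_cont.mono hprodsub)
      (fun s hs x hx => (hwt s (hIocsub hs) x hx).mono (Set.Ioc_subset_Ioc_right htT))
      (fun s hs x hx => hwx s (hIocsub hs) x hx)
      (fun s hs x hx => hwxx s (hIocsub hs) x hx)
      (fun s hs x hx => hpde s (hIocsub hs) x hx)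
      (fun y hy => lt_of_le_of_lt (le_abs_self _) (by simpa [hPdef] using hinit_bound y hy))
      (fun s hs => by
        rw [(hbc s (hIoctT hs)).1]
        exact lt_of_le_of_lt (le_trans (le_abs_self _) (le_max_left _ _)) (hlat_bound s hs))
      (fun s hs => by
        rw [(hbc s (hIoctT hs)).2]
        exact lt_of_le_of_lt (le_trans (le_abs_self _) (le_max_right _ _)) (hlat_bound s hs))
      x hx
    -- lower bound : -w ≤ V
    have hdown := aux_comparison t κstar ζ φ (K + ε) ht0 hκstar hCpos hφ0 hφπ hζ0
      (by simpa [hPdef] using hζ1) a (fun s x => -(w s x)) (fun s x => -(wt s x))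
      (fun s x => -(wx s x)) (fun s x => -(wxx s x))
      (fun s _ x _ => hκ _)
      ((hw_cont.mono hprodsub).neg)
      (fun s hs x hx => ((hwt s (hIocsub hs) x hx).mono (Set.Ioc_subset_Ioc_right htT)).neg)
      (fun s hs x hx => (hwx s (hIocsub hs) x hx).neg)
      (fun s hs x hx => (hwxx s (hIocsub hs) x hx).neg)
      (fun s hs x hx => by
        have := hpde s (hIocsub hs) x hx
        simp only [hadef]
        linarith)
      (fun y hy => by
        exact lt_of_le_of_lt (neg_le_abs _) (by simpa [hPdef] using hinit_bound y hy))
      (fun s hs => by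
        rw [(hbc s (hIoctT hs)).1]
        exact lt_of_le_of_lt (le_trans (neg_le_abs _) (le_max_left _ _)) (hlat_bound s hs))
      (fun s hs => by
        rw [(hbc s (hIoctT hs)).2]
        exact lt_of_le_of_lt (le_trans (neg_le_abs _) (le_max_right _ _)) (hlat_bound s hs))
      x hx
    -- combine
    have hnum : (K + ε) * Real.sin (P*x + φ) ≤ (K + ε) :=
      mul_le_of_le_one_right hCpos.le (hη_le x)
    have hVle : (K + ε) * Real.sin (P*x + φ) / Real.sin φ ≤ (K + ε) / Real.sin φ :=
      (div_le_div_iff_of_pos_right hsφ).mpr hnum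
    have hup' : w t x ≤ (K + ε) * Real.sin (P*x + φ) / Real.sin φ := by
      have := hup
      rw [← hPdef] at this
      exact this
    have hdown' : -(w t x) ≤ (K + ε) * Real.sin (P*x + φ) / Real.sin φ := by
      have : (fun s x => -(w s x)) t x ≤
          (K + ε) * Real.sin ((Real.pi - 2*φ)*x + φ) / Real.sin φ := hdown
      rw [← hPdef] at this
      exact this
    rw [abs_le]
    constructor
    · linarith
    · linarith
  -- remove the ε
  have hbound : ∀ x ∈ Set.Icc (0:ℝ) 1, |w t x| ≤ K / Real.sin φ := by
    intro x hx
    refine le_of_forall_pos_le_add ?_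
    intro ε hε
    have h1 := claim (ε * Real.sin φ) (by positivity) x hx
    have heq : (K + ε * Real.sin φ) / Real.sin φ = K / Real.sin φ + ε := by
      field_simp
    rw [heq] at h1
    exact h1
  -- conclude
  have hne : ((fun x => |w t x|) '' Set.Icc (0:ℝ) 1).Nonempty :=
    ⟨|w t 0|, Set.mem_image_of_mem _ ⟨le_refl (0:ℝ), zero_le_one⟩⟩
  apply csSup_le hne
  rintro b ⟨x, hx, rfl⟩
  calc |w t x| ≤ K / Real.sin φ := hbound x hx
    _ = (1 / Real.sin φ) * K := (one_div_mul_eq_div _ _).symm
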